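/- The set of minimizers of the tropical Fermat–Weber objective is max-tropically convex: if x and y are both minimizers and a, b ∈ ℝ, then the coordinatewise maximum z with z_j = max(a + x_j, b + y_j) is also a minimizer. -/

import Mathlib

open Finset

noncomputable def dtr {d : ℕ} (u v : Fin (d+1) → ℝ) : ℝ :=
  univ.sup' univ_nonempty (fun j => u j - v j) -
  univ.inf' univ_nonempty (fun j => u j - v j)

noncomputable def fw {d n : ℕ} (p : Fin n → Fin (d+1) → ℝ) (x : Fin (d+1) → ℝ) : ℝ :=
  ∑ i, dtr x (p i)

lemma dtr_translate {d : ℕ} (c : ℝ) (x v : Fin (d+1) → ℝ) :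
    dtr (fun j => c + x j) v = dtr x v := by
  unfold dtr
  have h1 : (univ : Finset (Fin (d+1))).sup' univ_nonempty (fun j => (c + x j) - v j)
      = c + univ.sup' univ_nonempty (fun j => x j - v j) := by
    have h := Finset.comp_sup'_eq_sup'_comp (s := (univ : Finset (Fin (d+1))))
      univ_nonempty (f := fun j => x j - v j) (fun r : ℝ => c + r)
      (fun s t => by simp [max_add_add_left])
    rw [show (fun j : Fin (d+1) => (c + x j) - v j)
        = ((fun r : ℝ => c + r) ∘ (fun j => x j - v j)) by funext j; simp; ring]
    exact h.symm
  have h2 : (univ : Finset (Fin (d+1))).inf' univ_nonempty (fun j => (c + x j) - v j)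
      = c + univ.inf' univ_nonempty (fun j => x j - v j) := by
    have h := Finset.apply_inf'_eq_inf'_comp (s := (univ : Finset (Fin (d+1))))
      univ_nonempty (f := fun j => x j - v j) (fun r : ℝ => c + r)
      (fun s t => by simp [min_add_add_left])
    rw [show (fun j : Fin (d+1) => (c + x j) - v j)
        = ((fun r : ℝ => c + r) ∘ (fun j => x j - v j)) by funext j; simp; ring]
    exact h.symm
  rw [h1, h2]; ring

lemma fw_translate {d n : ℕ} (p : Fin n → Fin (d+1) → ℝ) (c : ℝ) (x : Fin (d+1) → ℝ) :
    fw p (fun j => c + x j) = fw p x := by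
  unfold fw
  exact Finset.sum_congr rfl (fun i _ => dtr_translate c x (p i))

lemma dtr_submodular {d : ℕ} (u v w : Fin (d+1) → ℝ) :
    dtr (fun j => max (u j) (v j)) w + dtr (fun j => min (u j) (v j)) w
      ≤ dtr u w + dtr v w := by
  unfold dtr
  set Su := (univ : Finset (Fin (d+1))).sup' univ_nonempty (fun j => u j - w j) with hSu
  set Sv := (univ : Finset (Fin (d+1))).sup' univ_nonempty (fun j => v j - w j) with hSv
  set Iu := (univ : Finset (Fin (d+1))).inf' univ_nonempty (fun j => u j - w j) with hIu
  set Iv := (univ : Finset (Fin (d+1))).inf' univ_nonempty (fun j => v j - w j) with hIv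
  have hS1 : (univ : Finset (Fin (d+1))).sup' univ_nonempty
      (fun j => max (u j) (v j) - w j) ≤ max Su Sv := by
    apply Finset.sup'_le
    intro j _
    rcases le_total (u j) (v j) with h | h
    · rw [max_eq_right h, hSv]
      exact le_max_of_le_right (Finset.le_sup' (fun k => v k - w k) (Finset.mem_univ j))
    · rw [max_eq_left h, hSu]
      exact le_max_of_le_left (Finset.le_sup' (fun k => u k - w k) (Finset.mem_univ j))
  have hS2 : (univ : Finset (Fin (d+1))).sup' univ_nonempty
      (fun j => min (u j) (v j) - w j) ≤ min Su Sv := by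
    apply le_min
    · rw [hSu]
      apply Finset.sup'_le
      intro j _
      exact le_trans (by simp) (Finset.le_sup' (fun j => u j - w j) (Finset.mem_univ j))
    · rw [hSv]
      apply Finset.sup'_le
      intro j _
      exact le_trans (by simp) (Finset.le_sup' (fun j => v j - w j) (Finset.mem_univ j))
  have hI1 : max Iu Iv ≤ (univ : Finset (Fin (d+1))).inf' univ_nonempty
      (fun j => max (u j) (v j) - w j) := by
    apply Finset.le_inf'
    intro j _
    rcases le_total (u j) (v j) with h | h
    · rw [max_eq_right h]
      apply max_le
      · rw [hIu]
        exact le_trans (Finset.inf'_le _ (Finset.mem_univ j)) (by linarith)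
      · rw [hIv]
        exact Finset.inf'_le _ (Finset.mem_univ j)
    · rw [max_eq_left h]
      apply max_le
      · rw [hIu]
        exact Finset.inf'_le _ (Finset.mem_univ j)
      · rw [hIv]
        exact le_trans (Finset.inf'_le _ (Finset.mem_univ j)) (by linarith)
  have hI2 : min Iu Iv ≤ (univ : Finset (Fin (d+1))).inf' univ_nonempty
      (fun j => min (u j) (v j) - w j) := by
    apply Finset.le_inf'
    intro j _
    rcases le_total (u j) (v j) with h | h
    · rw [min_eq_left h, hIu]
      exact le_trans (min_le_left _ _) (Finset.inf'_le _ (Finset.mem_univ j))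
    · rw [min_eq_right h, hIv]
      exact le_trans (min_le_right _ _) (Finset.inf'_le _ (Finset.mem_univ j))
  have key : max Su Sv + min Su Sv = Su + Sv := max_add_min _ _
  have key2 : max Iu Iv + min Iu Iv = Iu + Iv := max_add_min _ _
  linarith

lemma fw_submodular {d n : ℕ} (p : Fin n → Fin (d+1) → ℝ) (u v : Fin (d+1) → ℝ) :
    fw p (fun j => max (u j) (v j)) + fw p (fun j => min (u j) (v j))
      ≤ fw p u + fw p v := by
  unfold fw
  rw [← Finset.sum_add_distrib, ← Finset.sum_add_distrib]
  exact Finset.sum_le_sum (fun i _ => dtr_submodular u v (p i))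

theorem stmt8 {d n : ℕ} (p : Fin n → Fin (d+1) → ℝ) (x y : Fin (d+1) → ℝ) (a b : ℝ)
    (hx : ∀ w, fw p x ≤ fw p w) (hy : ∀ w, fw p y ≤ fw p w) :
    ∀ w, fw p (fun j => max (a + x j) (b + y j)) ≤ fw p w := by
  intro w
  have hu : fw p (fun j => a + x j) = fw p x := fw_translate p a x
  have hv : fw p (fun j => b + y j) = fw p y := fw_translate p b y
  have hxy : fw p y = fw p x := le_antisymm (hy x) (hx y)
  have hmin : fw p x ≤ fw p (fun j => min (a + x j) (b + y j)) := hx _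
  have hsub := fw_submodular p (fun j => a + x j) (fun j => b + y j)
  have : fw p (fun j => max (a + x j) (b + y j)) ≤ fw p x := by
    rw [hu, hv, hxy] at hsub
    linarith
  exact le_trans this (hx w)
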